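/- arXiv:2010.08332 — 3 statements merged into one kernel-verified Lean document; each statement's English description precedes it below -/
import Mathlib

section
/- Let a_1,...,a_n be complex numbers, d_1,...,d_n real numbers, and define f(x) = ∑_{k=1}^n conj(a_k)·e(d_k x) where e(t) = exp(2πit). Then for all real x and τ, |f(x+τ) − f(x)| ≤ 2π·√(∑_{k=1}^n |a_k|²)·√(∑_{k=1}^n ‖d_k τ‖²), where ‖·‖ denotes the distance to the nearest integer. -/
noncomputable def e (t : ℝ) : ℂ := Complex.exp (2 * Real.pi * Complex.I * t)

noncomputable def distNearestInt (x : ℝ) : ℝ := |x - round x|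

lemma abs_exp_mul_I_sub_one_le (θ : ℝ) :
    ‖Complex.exp (θ * Complex.I) - 1‖ ≤ |θ| := by
  have h2 : ‖Complex.exp (θ * Complex.I) - 1‖ ^ 2 = 2 - 2 * Real.cos θ := by
    rw [Complex.sq_norm, Complex.normSq_apply]
    simp [Complex.sub_re, Complex.sub_im, Complex.exp_ofReal_mul_I_re,
      Complex.exp_ofReal_mul_I_im]
    nlinarith [Real.sin_sq_add_cos_sq θ]
  have h3 : 2 - 2 * Real.cos θ ≤ θ ^ 2 := by
    nlinarith [Real.one_sub_sq_div_two_le_cos (x := θ)]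
  have h4 : ‖Complex.exp (θ * Complex.I) - 1‖ ^ 2 ≤ |θ| ^ 2 := by
    rw [h2, sq_abs]; exact h3
  calc ‖Complex.exp (θ * Complex.I) - 1‖
      = Real.sqrt (‖Complex.exp (θ * Complex.I) - 1‖ ^ 2) :=
        (Real.sqrt_sq (norm_nonneg _)).symm
    _ ≤ Real.sqrt (|θ| ^ 2) := Real.sqrt_le_sqrt h4
    _ = |θ| := Real.sqrt_sq (abs_nonneg θ)

lemma e_add (s t : ℝ) : e (s + t) = e s * e t := by
  unfold e
  rw [← Complex.exp_add]
  push_cast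
  ring_nf

lemma e_int (m : ℤ) : e (m : ℝ) = 1 := by
  unfold e
  push_cast
  rw [show 2 * (Real.pi : ℂ) * Complex.I * m = m * (2 * Real.pi * Complex.I) by ring]
  exact Complex.exp_int_mul_two_pi_mul_I m

lemma abs_e (t : ℝ) : ‖e t‖ = 1 := by
  unfold e
  rw [show 2 * (Real.pi : ℂ) * Complex.I * t = (2 * Real.pi * t : ℝ) * Complex.I by push_cast; ring]
  exact Complex.norm_exp_ofReal_mul_I _

lemma e_sub_one_bound (t : ℝ) :
    ‖e t - 1‖ ≤ 2 * Real.pi * distNearestInt t := by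
  have h1 : e t = e (t - round t) := by
    have : e t = e ((t - round t) + (round t : ℝ)) := by norm_num
    rw [this, e_add, e_int, mul_one]
  rw [h1]
  have h2 : e (t - round t) =
      Complex.exp ((↑(2 * Real.pi * (t - round t)) : ℂ) * Complex.I) := by
    unfold e; congr 1; push_cast; ring
  rw [h2]
  calc ‖Complex.exp ((↑(2 * Real.pi * (t - round t)) : ℂ) * Complex.I) - 1‖
      ≤ |2 * Real.pi * (t - round t)| := abs_exp_mul_I_sub_one_le _
    _ = 2 * Real.pi * distNearestInt t := by
        rw [abs_mul, abs_of_pos (by positivity : (0:ℝ) < 2 * Real.pi)]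
        rfl

theorem exp_sum_shift_bound (n : ℕ) (a : Fin n → ℂ) (d : Fin n → ℝ) (x τ : ℝ) :
    ‖(∑ k, (starRingEnd ℂ) (a k) * e (d k * (x + τ))) -
      ∑ k, (starRingEnd ℂ) (a k) * e (d k * x)‖ ≤
    2 * Real.pi * Real.sqrt (∑ k, ‖a k‖ ^ 2) *
      Real.sqrt (∑ k, distNearestInt (d k * τ) ^ 2) := by
  set u : Fin n → ℝ := fun k => distNearestInt (d k * τ) with hu
  have step1 : ‖(∑ k, (starRingEnd ℂ) (a k) * e (d k * (x + τ))) -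
      ∑ k, (starRingEnd ℂ) (a k) * e (d k * x)‖ ≤
      ∑ k, ‖a k‖ * (2 * Real.pi * u k) := by
    rw [← Finset.sum_sub_distrib]
    refine (norm_sum_le _ _).trans ?_
    apply Finset.sum_le_sum
    intro k _
    have hsplit : (starRingEnd ℂ) (a k) * e (d k * (x + τ)) -
        (starRingEnd ℂ) (a k) * e (d k * x) =
        (starRingEnd ℂ) (a k) * e (d k * x) * (e (d k * τ) - 1) := by
      rw [show d k * (x + τ) = d k * x + d k * τ by ring, e_add]; ring
    rw [hsplit, norm_mul, norm_mul, Complex.norm_conj, abs_e, mul_one]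
    exact mul_le_mul_of_nonneg_left (e_sub_one_bound _) (norm_nonneg _)
  have hun : ∀ k, 0 ≤ u k := fun k => abs_nonneg _
  have cs : ∑ k, ‖a k‖ * (2 * Real.pi * u k) ≤
      Real.sqrt (∑ k, ‖a k‖ ^ 2) *
        Real.sqrt (∑ k, (2 * Real.pi * u k) ^ 2) := by
    have h := Finset.sum_mul_sq_le_sq_mul_sq (Finset.univ : Finset (Fin n))
      (fun k => ‖a k‖) (fun k => 2 * Real.pi * u k)
    have hnn : (0:ℝ) ≤ ∑ k, ‖a k‖ * (2 * Real.pi * u k) :=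
      Finset.sum_nonneg fun k _ => mul_nonneg (norm_nonneg _)
        (mul_nonneg (by positivity) (hun k))
    calc ∑ k, ‖a k‖ * (2 * Real.pi * u k)
        = Real.sqrt ((∑ k, ‖a k‖ * (2 * Real.pi * u k)) ^ 2) :=
          (Real.sqrt_sq hnn).symm
      _ ≤ Real.sqrt ((∑ k, ‖a k‖ ^ 2) * ∑ k, (2 * Real.pi * u k) ^ 2) :=
          Real.sqrt_le_sqrt h
      _ = _ := Real.sqrt_mul (Finset.sum_nonneg fun k _ => sq_nonneg _) _
  have hrt : Real.sqrt (∑ k, (2 * Real.pi * u k) ^ 2) =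
      2 * Real.pi * Real.sqrt (∑ k, u k ^ 2) := by
    have : ∑ k, (2 * Real.pi * u k) ^ 2 = (2 * Real.pi) ^ 2 * ∑ k, u k ^ 2 := by
      rw [Finset.mul_sum]; exact Finset.sum_congr rfl fun k _ => by ring
    rw [this, Real.sqrt_mul (by positivity), Real.sqrt_sq (by positivity)]
  calc ‖_‖ ≤ ∑ k, ‖a k‖ * (2 * Real.pi * u k) := step1
    _ ≤ Real.sqrt (∑ k, ‖a k‖ ^ 2) *
        Real.sqrt (∑ k, (2 * Real.pi * u k) ^ 2) := cs
    _ = 2 * Real.pi * Real.sqrt (∑ k, ‖a k‖ ^ 2) *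
        Real.sqrt (∑ k, u k ^ 2) := by rw [hrt]; ring
end

section
/- Let ω ≥ 1 be real, n ∈ ℕ, and d_1,...,d_n ∈ ℝ. Then there exists a positive integer T (depending only on d_1,...,d_n, n, ω) such that for every integer a there exists an integer h ∈ [a, a+T] satisfying ∑_{k=1}^n ‖h·d_k‖² ≤ n/ω. -/
open Filter Topology

-- In a compact first-countable topological additive group, the full ℤ-orbit of x
-- lies in the closure of the forward ℕ-orbit.
theorem aux_forward_dense {G : Type*} [AddCommGroup G] [TopologicalSpace G]
    [IsTopologicalAddGroup G] [CompactSpace G] [FirstCountableTopology G]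
    (x : G) (h : ℤ) : h • x ∈ closure (Set.range fun t : ℕ => ((t : ℤ) • x : G)) := by
  set u : ℕ → G := fun t => ((t : ℤ) • x : G) with hu
  obtain ⟨y, φ, hφ, hlim⟩ := CompactSpace.tendsto_subseq u
  set S := closure (Set.range u) with hS
  have hmem : ∀ z : ℤ, 0 ≤ z → z • x ∈ Set.range u := by
    intro z hz
    refine ⟨z.toNat, ?_⟩
    show ((z.toNat : ℤ)) • x = z • x
    rw [Int.toNat_of_nonneg hz]
  have step1 : ∀ j : ℕ, y + (h - (φ j : ℤ)) • x ∈ S := by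
    intro j
    have htend : Tendsto (fun i : ℕ => u (φ i) + (h - (φ j : ℤ)) • x) atTop
        (𝓝 (y + (h - (φ j : ℤ)) • x)) := hlim.add tendsto_const_nhds
    have heq : ∀ i : ℕ, u (φ i) + (h - (φ j : ℤ)) • x = ((φ i : ℤ) + (h - (φ j : ℤ))) • x := by
      intro i; rw [add_zsmul]
    have hev : ∀ᶠ i in atTop, (fun i : ℕ => u (φ i) + (h - (φ j : ℤ)) • x) i ∈ Set.range u := by
      have : ∀ᶠ i : ℕ in atTop, ((φ j : ℤ) - h).toNat ≤ i := eventually_ge_atTop _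
      filter_upwards [this] with i hi
      rw [heq i]
      apply hmem
      have h1 : ((φ j : ℤ) - h).toNat ≤ φ i := le_trans hi (hφ.le_apply)
      have h2 : (φ j : ℤ) - h ≤ (φ i : ℤ) := le_trans (Int.self_le_toNat _) (by exact_mod_cast h1)
      omega
    exact mem_closure_of_tendsto htend hev
  have step2 : Tendsto (fun j : ℕ => y + (h - (φ j : ℤ)) • x) atTop (𝓝 (h • x)) := by
    have : ∀ j : ℕ, y + (h - (φ j : ℤ)) • x = (y + h • x) - u (φ j) := by
      intro j; rw [sub_zsmul, hu]; abel
    simp only [this]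
    have := (tendsto_const_nhds : Tendsto (fun _ : ℕ => y + h • x) atTop (𝓝 (y + h • x))).sub hlim
    simpa using this
  have : h • x ∈ closure S := mem_closure_of_tendsto step2 (Eventually.of_forall step1)
  rwa [hS, closure_closure] at this

theorem chen_corollary (ω : ℝ) (hω : 1 ≤ ω) (n : ℕ) (d : Fin n → ℝ) :
    ∃ T : ℕ, 0 < T ∧ ∀ a : ℤ, ∃ h : ℤ, a ≤ h ∧ h ≤ a + T ∧
      ∑ k, distNearestInt ((h : ℝ) * d k) ^ 2 ≤ n / ω := by
  haveI : Fact ((0:ℝ) < 1) := ⟨one_pos⟩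
  have hω0 : (0:ℝ) < ω := lt_of_lt_of_le one_pos hω
  set ε : ℝ := Real.sqrt (1 / ω) with hε
  have hε0 : 0 < ε := Real.sqrt_pos.mpr (by positivity)
  have hε2 : ε ^ 2 = 1 / ω := Real.sq_sqrt (by positivity)
  set G := Fin n → UnitAddCircle with hG
  set x : G := fun k => ((d k : ℝ) : UnitAddCircle) with hx
  -- the key norm computation
  have hnorm : ∀ (h : ℤ) (k : Fin n), ‖(h • x) k‖ = distNearestInt ((h : ℝ) * d k) := by
    intro h k
    have : (h • x) k = (((h : ℝ) * d k : ℝ) : UnitAddCircle) := by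
      show h • ((d k : ℝ) : UnitAddCircle) = _
      rw [← QuotientAddGroup.mk_zsmul]
      congr 1
      simp [zsmul_eq_mul]
    rw [this, UnitAddCircle.norm_eq]
    rfl
  set U : Set G := {g | ∀ k, ‖g k‖ < ε} with hU
  have hUopen : IsOpen U := by
    have : U = ⋂ k, (fun g : G => g k) ⁻¹' Metric.ball 0 ε := by
      ext g; simp [hU, mem_ball_zero_iff]
    rw [this]
    exact isOpen_iInter_of_finite fun k => (Metric.isOpen_ball).preimage (continuous_apply k)
  set Y : Set G := closure (Set.range fun a : ℤ => a • x) with hY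
  have hYcomp : IsCompact Y := isClosed_closure.isCompact
  -- cover
  have hcover : Y ⊆ ⋃ t : ℕ, (fun g : G => g + (t : ℤ) • x) ⁻¹' U := by
    intro y hy
    have hyneg : -y ∈ Y := by
      have : -y ∈ closure (Neg.neg '' Set.range fun a : ℤ => a • x) := by
        have := image_closure_subset_closure_image (f := fun g : G => -g)
          (s := Set.range fun a : ℤ => a • x) continuous_neg
        exact this ⟨y, hy, rfl⟩
      refine closure_mono ?_ this
      rintro _ ⟨_, ⟨a, rfl⟩, rfl⟩
      exact ⟨-a, by simp⟩
    have hyneg' : -y ∈ closure (Set.range fun t : ℕ => ((t : ℤ) • x : G)) := by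
      have hsub : (Set.range fun a : ℤ => a • x) ⊆
          closure (Set.range fun t : ℕ => ((t : ℤ) • x : G)) := by
        rintro _ ⟨a, rfl⟩; exact aux_forward_dense x a
      have := closure_mono hsub hyneg
      rwa [closure_closure] at this
    -- the set {g | y + g ∈ U} is an open nbhd of -y
    have hopen : IsOpen {g : G | y + g ∈ U} := hUopen.preimage (continuous_const.add continuous_id)
    have hmemnbhd : -y ∈ {g : G | y + g ∈ U} := by
      show ∀ k, ‖(y + -y) k‖ < ε
      intro k
      rw [add_neg_cancel]
      show ‖(0 : UnitAddCircle)‖ < ε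
      rw [norm_zero]
      exact hε0
    obtain ⟨g, hg1, t, rfl⟩ := mem_closure_iff.mp hyneg' _ hopen hmemnbhd
    exact Set.mem_iUnion.mpr ⟨t, hg1⟩
  obtain ⟨F, hF⟩ := hYcomp.elim_finite_subcover _
    (fun t : ℕ => hUopen.preimage (continuous_id.add continuous_const)) hcover
  refine ⟨F.sup id + 1, Nat.succ_pos _, fun a => ?_⟩
  have haY : a • x ∈ Y := subset_closure ⟨a, rfl⟩
  obtain ⟨t, htF, ht⟩ := Set.mem_iUnion₂.mp (hF haY)
  refine ⟨a + t, by omega, ?_, ?_⟩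
  · have : t ≤ F.sup id := Finset.le_sup (f := id) htF
    push_cast; omega
  · have hgood : ∀ k, ‖((a + (t:ℤ)) • x) k‖ < ε := by
      intro k
      have : a • x + (t : ℤ) • x ∈ U := ht
      rw [← add_zsmul] at this
      exact this k
    have hle : ∀ k, distNearestInt (((a + (t:ℤ)) : ℝ) * d k) ^ 2 ≤ ε ^ 2 := by
      intro k
      have h1 := hgood k
      rw [hnorm (a + (t:ℤ)) k] at h1
      push_cast at h1 ⊢
      exact pow_le_pow_left₀ (abs_nonneg _) h1.le 2
    calc ∑ k, distNearestInt (((a + (t:ℤ) : ℤ) : ℝ) * d k) ^ 2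
        ≤ ∑ _k : Fin n, ε ^ 2 := Finset.sum_le_sum fun k _ => by
          have := hle k; push_cast at this ⊢; exact this
      _ = n * ε ^ 2 := by simp [mul_comm]
      _ = n / ω := by rw [hε2]; ring
end

section
/- Let H be a real Hilbert space and (u_n) a sequence in H with ∑_{n=1}^∞ ‖u_n‖² < ∞. Suppose that for every unit vector e ∈ H the series ∑_{n=1}^∞ ⟨u_n, e⟩ can be rearranged to converge conditionally. Then for every v ∈ H there exists a permutation (n_k) of ℕ such that ∑_{k=1}^∞ u_{n_k} = v. -/
open Filter Finset

section pecherskyHelpers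

variable {H : Type*} [NormedAddCommGroup H] [InnerProductSpace ℝ H]





private lemma pech_pos_not_summable {a : ℕ → ℝ} (π : Equiv.Perm ℕ)
    (h : Tendsto (fun N => ∑ n ∈ Finset.range N, a (π n)) atTop atTop) :
    ¬ Summable (fun n => max (a n) 0) := by
  intro hs
  have hb : ∀ N, ∑ n ∈ Finset.range N, a (π n) ≤ ∑' n, max (a n) 0 := by
    intro N
    calc ∑ n ∈ Finset.range N, a (π n) ≤ ∑ n ∈ Finset.range N, max (a (π n)) 0 :=
          Finset.sum_le_sum fun n _ => le_max_left _ _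
      _ = ∑ m ∈ (Finset.range N).image π, max (a m) 0 := by
          rw [Finset.sum_image (fun x _ y _ hxy => π.injective hxy)]
      _ ≤ ∑' n, max (a n) 0 := Summable.sum_le_tsum _ (fun n _ => le_max_right _ _) hs
  obtain ⟨N, hN⟩ := (h.eventually (eventually_gt_atTop (∑' n, max (a n) 0))).exists
  exact absurd (hb N) (not_le.2 hN)

private lemma pech_exists_pos_block {a : ℕ → ℝ} (h : ¬ Summable (fun n => max (a n) 0))
    (N : ℕ) (C : ℝ) :
    ∃ G : Finset ℕ, (∀ n ∈ G, N ≤ n ∧ 0 < a n) ∧ C < ∑ n ∈ G, a n := by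
  classical
  have h' : ¬ Summable (fun n => max (a (n + N)) 0) := fun hs =>
    h ((summable_nat_add_iff N).1 hs)
  have hnn : ∀ n, 0 ≤ max (a (n + N)) 0 := fun n => le_max_right _ _
  have ht := (not_summable_iff_tendsto_nat_atTop_of_nonneg hnn).1 h'
  obtain ⟨K, hK⟩ := (ht.eventually (eventually_gt_atTop C)).exists
  refine ⟨((Finset.range K).image (· + N)).filter (fun m => 0 < a m), ?_, ?_⟩
  · intro n hn
    simp only [Finset.mem_filter, Finset.mem_image, Finset.mem_range] at hn
    obtain ⟨⟨m, _, rfl⟩, hpos⟩ := hn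
    exact ⟨Nat.le_add_left _ _, hpos⟩
  · have h1 : ∑ n ∈ Finset.range K, max (a (n + N)) 0
        = ∑ m ∈ (Finset.range K).image (· + N), max (a m) 0 := by
      rw [Finset.sum_image (fun x _ y _ hxy => by simpa using hxy)]
    have h2 : ∑ m ∈ ((Finset.range K).image (· + N)).filter (fun m => 0 < a m), max (a m) 0
        = ∑ m ∈ (Finset.range K).image (· + N), max (a m) 0 :=
      Finset.sum_filter_of_ne (fun x _ hx => by
        by_contra hc
        exact hx (max_eq_right (le_of_not_gt hc)))
    have h3 : ∑ m ∈ ((Finset.range K).image (· + N)).filter (fun m => 0 < a m), max (a m) 0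
        = ∑ m ∈ ((Finset.range K).image (· + N)).filter (fun m => 0 < a m), a m :=
      Finset.sum_congr rfl (fun x hx => by
        have := (Finset.mem_filter.1 hx).2
        exact max_eq_left this.le)
    rw [← h3, h2, ← h1]
    exact hK

private lemma pech_round (x : ℕ → H) (T : Finset ℕ) (p : ℕ → ℝ)
    (h0 : ∀ n, 0 ≤ p n) (h1 : ∀ n, p n ≤ 1) :
    ∃ G ⊆ T, ‖(∑ n ∈ G, x n) - ∑ n ∈ T, p n • x n‖ ^ 2 ≤ ∑ n ∈ T, ‖x n‖ ^ 2 := by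
  classical
  induction T using Finset.induction_on with
  | empty => exact ⟨∅, by simp⟩
  | @insert a s ha ih =>
    obtain ⟨G, hGs, hG⟩ := ih
    have haG : a ∉ G := fun hm => ha (hGs hm)
    by_cases hc : (inner ℝ (x a) ((∑ n ∈ G, x n) - ∑ n ∈ s, p n • x n) : ℝ) ≤ 0
    · refine ⟨insert a G, Finset.insert_subset_insert a hGs, ?_⟩
      rw [Finset.sum_insert haG, Finset.sum_insert ha, Finset.sum_insert ha]
      have he : x a + (∑ n ∈ G, x n) - (p a • x a + ∑ n ∈ s, p n • x n)
          = ((∑ n ∈ G, x n) - ∑ n ∈ s, p n • x n) + (1 - p a) • x a := by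
        rw [sub_smul, one_smul]; abel
      rw [he, norm_add_sq_real]
      have hin : (inner ℝ ((∑ n ∈ G, x n) - ∑ n ∈ s, p n • x n) ((1 - p a) • x a) : ℝ)
          = (1 - p a) * (inner ℝ (x a) ((∑ n ∈ G, x n) - ∑ n ∈ s, p n • x n) : ℝ) := by
        rw [real_inner_smul_right, real_inner_comm]
      have hns : ‖(1 - p a) • x a‖ ^ 2 = (1 - p a) ^ 2 * ‖x a‖ ^ 2 := by
        rw [norm_smul, mul_pow, Real.norm_eq_abs, sq_abs]
      rw [hin, hns]
      have hp0 := h0 a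
      have hp1 := h1 a
      have hcross : (1 - p a) * (inner ℝ (x a) ((∑ n ∈ G, x n) - ∑ n ∈ s, p n • x n) : ℝ) ≤ 0 :=
        mul_nonpos_of_nonneg_of_nonpos (by linarith) hc
      have hsq1 : (1 - p a) ^ 2 ≤ 1 := by nlinarith
      have hsq2 : (1 - p a) ^ 2 * ‖x a‖ ^ 2 ≤ 1 * ‖x a‖ ^ 2 :=
        mul_le_mul_of_nonneg_right hsq1 (sq_nonneg _)
      linarith
    · push_neg at hc
      refine ⟨G, hGs.trans (Finset.subset_insert a s), ?_⟩
      rw [Finset.sum_insert ha, Finset.sum_insert ha]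
      have he : (∑ n ∈ G, x n) - (p a • x a + ∑ n ∈ s, p n • x n)
          = ((∑ n ∈ G, x n) - ∑ n ∈ s, p n • x n) - p a • x a := by abel
      rw [he, norm_sub_sq_real]
      have hin : (inner ℝ ((∑ n ∈ G, x n) - ∑ n ∈ s, p n • x n) (p a • x a) : ℝ)
          = p a * (inner ℝ (x a) ((∑ n ∈ G, x n) - ∑ n ∈ s, p n • x n) : ℝ) := by
        rw [real_inner_smul_right, real_inner_comm]
      have hns : ‖p a • x a‖ ^ 2 = (p a) ^ 2 * ‖x a‖ ^ 2 := by
        rw [norm_smul, mul_pow, Real.norm_eq_abs, sq_abs]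
      rw [hin, hns]
      have hp0 := h0 a
      have hp1 := h1 a
      have hcross : 0 ≤ p a * (inner ℝ (x a) ((∑ n ∈ G, x n) - ∑ n ∈ s, p n • x n) : ℝ) :=
        mul_nonneg hp0 hc.le
      have hsq1 : (p a) ^ 2 ≤ 1 := by nlinarith
      have hsq2 : (p a) ^ 2 * ‖x a‖ ^ 2 ≤ 1 * ‖x a‖ ^ 2 :=
        mul_le_mul_of_nonneg_right hsq1 (sq_nonneg _)
      linarith





private lemma pech_ordering (x : ℕ → H) (F : Finset ℕ) :
    ∃ l : List ℕ, l.Nodup ∧ l.toFinset = F ∧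
      ∀ j, ‖((l.take j).map x).sum‖
        ≤ ‖∑ n ∈ F, x n‖ + Real.sqrt (∑ n ∈ F, ‖x n‖ ^ 2) := by
  classical
  rcases Finset.eq_empty_or_nonempty F with rfl | hFne
  · refine ⟨[], by simp, by simp, fun j => by simp [Real.sqrt_nonneg]⟩
  set m : ℕ := F.card with hm
  have hm0 : 0 < m := Finset.card_pos.2 hFne
  have hmR : (0:ℝ) < (m:ℝ) := by exact_mod_cast hm0
  set s : H := ∑ n ∈ F, x n with hs
  set c : H := (m:ℝ)⁻¹ • s with hc
  set y : ℕ → H := fun n => x n - c with hy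
  -- sum of y over F is zero
  have hyF : ∑ n ∈ F, y n = 0 := by
    have h1 : ∑ n ∈ F, y n = s - (m:ℝ) • c := by
      rw [hy]
      rw [Finset.sum_sub_distrib]
      congr 1
      rw [Finset.sum_const, hm, ← Nat.cast_smul_eq_nsmul ℝ]
    rw [h1, hc, smul_smul, mul_inv_cancel₀ (ne_of_gt hmR), one_smul, sub_self]
  -- main invariant construction
  have main : ∀ k, k ≤ m → ∃ l : List ℕ, l.Nodup ∧ l.length = k ∧ (∀ n ∈ l, n ∈ F) ∧
      ∀ j, ‖((l.take j).map y).sum‖ ^ 2 ≤ ∑ n ∈ (l.take j).toFinset, ‖y n‖ ^ 2 := by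
    intro k
    induction k with
    | zero => exact fun _ => ⟨[], by simp, by simp, by simp, fun j => by simp⟩
    | succ k ih =>
      intro hk
      obtain ⟨l, hnd, hlen, hsub, hbound⟩ := ih (Nat.le_of_succ_le hk)
      have hltoF : l.toFinset ⊆ F := fun n hn => hsub n (List.mem_toFinset.1 hn)
      have hcard : l.toFinset.card = k := by
        rw [List.toFinset_card_of_nodup hnd, hlen]
      have hRne : (F \ l.toFinset).Nonempty := by
        rw [← Finset.card_pos, Finset.card_sdiff_of_subset hltoF, hcard]
        omega
      set E : H := (l.map y).sum with hE
      have hEsum : ∑ n ∈ l.toFinset, y n = E := List.sum_toFinset y hnd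
      have hRsum : ∑ n ∈ F \ l.toFinset, y n = -E := by
        have := Finset.sum_sdiff (f := y) hltoF
        rw [hEsum, hyF] at this
        linear_combination (norm := abel) this - hEsum + hEsum
      have hpick : ∃ r ∈ F \ l.toFinset, (inner ℝ (y r) E : ℝ) ≤ 0 := by
        by_contra hall
        push_neg at hall
        have hpos : 0 < ∑ n ∈ F \ l.toFinset, (inner ℝ (y n) E : ℝ) :=
          Finset.sum_pos hall hRne
        have : ∑ n ∈ F \ l.toFinset, (inner ℝ (y n) E : ℝ) = (inner ℝ (-E) E : ℝ) := by
          rw [← sum_inner, hRsum]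
        rw [this, inner_neg_left] at hpos
        have := real_inner_self_nonneg (x := E)
        linarith
      obtain ⟨r, hrR, hrE⟩ := hpick
      have hrF : r ∈ F := (Finset.mem_sdiff.1 hrR).1
      have hrl : r ∉ l := fun hmem =>
        (Finset.mem_sdiff.1 hrR).2 (List.mem_toFinset.2 hmem)
      refine ⟨l ++ [r], ?_, ?_, ?_, ?_⟩
      · rw [List.nodup_append]
        exact ⟨hnd, List.nodup_singleton r, by
          intro a ha b hb hab
          rw [List.mem_singleton] at hb
          subst hb; subst hab; exact hrl ha⟩
      · simp [hlen]
      · intro n hn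
        rcases List.mem_append.1 hn with h | h
        · exact hsub n h
        · rw [List.mem_singleton] at h; subst h; exact hrF
      · intro j
        by_cases hj : j ≤ l.length
        · rw [List.take_append_of_le_length hj]
          exact hbound j
        · push_neg at hj
          have hlen2 : (l ++ [r]).length = l.length + 1 := by simp
          have htake : (l ++ [r]).take j = l ++ [r] :=
            List.take_of_length_le (by omega)
          rw [htake]
          have hmap : ((l ++ [r]).map y).sum = E + y r := by
            rw [List.map_append, List.sum_append]; simp [hE]
          have htf : (l ++ [r]).toFinset = insert r l.toFinset := by
            simp [List.toFinset_append]
          rw [hmap, htf, Finset.sum_insert (fun hmem =>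
            (Finset.mem_sdiff.1 hrR).2 hmem), norm_add_sq_real]
          have hEb : ‖E‖ ^ 2 ≤ ∑ n ∈ l.toFinset, ‖y n‖ ^ 2 := by
            have := hbound l.length
            rwa [List.take_length] at this
          have hinner : (inner ℝ E (y r) : ℝ) ≤ 0 := by
            rw [real_inner_comm]; exact hrE
          linarith
  obtain ⟨l, hnd, hlen, hsub, hbound⟩ := main m le_rfl
  have htoF : l.toFinset = F := by
    apply Finset.eq_of_subset_of_card_le
    · exact fun n hn => hsub n (List.mem_toFinset.1 hn)
    · rw [List.toFinset_card_of_nodup hnd, hlen]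
  -- sum of squares of y bounded by sum of squares of x
  have hyB : ∑ n ∈ F, ‖y n‖ ^ 2 ≤ ∑ n ∈ F, ‖x n‖ ^ 2 := by
    have hexp : ∀ n, ‖y n‖ ^ 2 = ‖x n‖ ^ 2 - 2 * (inner ℝ (x n) c : ℝ) + ‖c‖ ^ 2 := by
      intro n; rw [hy]; exact norm_sub_sq_real _ _
    have h1 : ∑ n ∈ F, ‖y n‖ ^ 2
        = (∑ n ∈ F, ‖x n‖ ^ 2) - 2 * (inner ℝ s c : ℝ) + (m:ℝ) * ‖c‖ ^ 2 := by
      simp only [hexp]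
      rw [Finset.sum_add_distrib, Finset.sum_sub_distrib, ← Finset.mul_sum,
        Finset.sum_const, hm, hs, sum_inner, nsmul_eq_mul]
    have h2 : (inner ℝ s c : ℝ) = (m:ℝ)⁻¹ * ‖s‖ ^ 2 := by
      rw [hc, real_inner_smul_right, real_inner_self_eq_norm_sq]
    have h3 : ‖c‖ ^ 2 = (m:ℝ)⁻¹ ^ 2 * ‖s‖ ^ 2 := by
      rw [hc, norm_smul, mul_pow, Real.norm_eq_abs, sq_abs]
    rw [h1, h2, h3]
    have : (m:ℝ) * ((m:ℝ)⁻¹ ^ 2 * ‖s‖ ^ 2) = (m:ℝ)⁻¹ * ‖s‖ ^ 2 := by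
      field_simp
    rw [this]
    have : 0 ≤ (m:ℝ)⁻¹ * ‖s‖ ^ 2 := by positivity
    linarith
  refine ⟨l, hnd, htoF, fun j => ?_⟩
  have hxy : ((l.take j).map x).sum
      = ((l.take j).map y).sum + ((l.take j).length : ℕ) • c := by
    have : ∀ n, x n = y n + c := fun n => by simp [hy]
    calc ((l.take j).map x).sum = ((l.take j).map (fun n => y n + c)).sum := by
          congr 1; exact List.map_congr_left (fun n _ => this n)
      _ = ((l.take j).map y).sum + ((l.take j).map (fun _ => c)).sum :=
          List.sum_map_add
      _ = ((l.take j).map y).sum + ((l.take j).length : ℕ) • c := by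
          rw [List.map_const', List.sum_replicate]
  rw [hxy]
  have hb1 : ‖((l.take j).map y).sum‖ ≤ Real.sqrt (∑ n ∈ F, ‖x n‖ ^ 2) := by
    rw [show Real.sqrt (∑ n ∈ F, ‖x n‖ ^ 2) = Real.sqrt (∑ n ∈ F, ‖x n‖ ^ 2) from rfl]
    rw [Real.le_sqrt (norm_nonneg _) (by positivity)]
    calc ‖((l.take j).map y).sum‖ ^ 2 ≤ ∑ n ∈ (l.take j).toFinset, ‖y n‖ ^ 2 := hbound j
      _ ≤ ∑ n ∈ F, ‖y n‖ ^ 2 := by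
          apply Finset.sum_le_sum_of_subset_of_nonneg
          · rw [← htoF]
            intro n hn
            rw [List.mem_toFinset] at hn ⊢
            exact List.mem_of_mem_take hn
          · intro i _ _; positivity
      _ ≤ ∑ n ∈ F, ‖x n‖ ^ 2 := hyB
  have hb2 : ‖((l.take j).length : ℕ) • c‖ ≤ ‖s‖ := by
    rw [← Nat.cast_smul_eq_nsmul ℝ, norm_smul, Real.norm_eq_abs, Nat.abs_cast, hc, norm_smul,
      Real.norm_eq_abs, abs_inv, Nat.abs_cast]
    have hlenle : ((l.take j).length : ℝ) ≤ (m:ℝ) := by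
      have : (l.take j).length ≤ l.length := by rw [List.length_take]; omega
      exact_mod_cast this.trans hlen.le
    calc ((l.take j).length : ℝ) * ((m:ℝ)⁻¹ * ‖s‖)
        ≤ (m:ℝ) * ((m:ℝ)⁻¹ * ‖s‖) := by
          apply mul_le_mul_of_nonneg_right hlenle; positivity
      _ = ‖s‖ := by field_simp
  calc ‖((l.take j).map y).sum + ((l.take j).length : ℕ) • c‖
      ≤ ‖((l.take j).map y).sum‖ + ‖((l.take j).length : ℕ) • c‖ := norm_add_le _ _
    _ ≤ Real.sqrt (∑ n ∈ F, ‖x n‖ ^ 2) + ‖s‖ := add_le_add hb1 hb2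
    _ = ‖∑ n ∈ F, x n‖ + Real.sqrt (∑ n ∈ F, ‖x n‖ ^ 2) := by rw [hs, add_comm]

-- real content below
private lemma pech_dir {u : ℕ → H}
    (hcond : ∀ e : H, ‖e‖ = 1 →
      (∃ πp : Equiv.Perm ℕ, Filter.Tendsto
        (fun N => ∑ n ∈ Finset.range N, (inner ℝ (u (πp n)) e : ℝ)) Filter.atTop Filter.atTop) ∧
      (∃ πm : Equiv.Perm ℕ, Filter.Tendsto
        (fun N => ∑ n ∈ Finset.range N, (inner ℝ (u (πm n)) e : ℝ)) Filter.atTop Filter.atBot))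
    {y : H} (hy : y ≠ 0) (N : ℕ) (C : ℝ) :
    ∃ G : Finset ℕ, (∀ n ∈ G, N ≤ n ∧ 0 < (inner ℝ (u n) y : ℝ))
      ∧ C < ∑ n ∈ G, (inner ℝ (u n) y : ℝ) := by
  have hynorm : (0:ℝ) < ‖y‖ := norm_pos_iff.2 hy
  set e : H := ‖y‖⁻¹ • y with he_def
  have he : ‖e‖ = 1 := norm_smul_inv_norm hy
  obtain ⟨πp, hπp⟩ := (hcond e he).1
  have hinner : ∀ n, (inner ℝ (u n) e : ℝ) = ‖y‖⁻¹ * (inner ℝ (u n) y : ℝ) := fun n => by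
    rw [he_def, real_inner_smul_right]
  have htend : Tendsto (fun N => ∑ n ∈ Finset.range N, (inner ℝ (u (πp n)) y : ℝ))
      atTop atTop := by
    have h1 : Tendsto (fun N => ‖y‖ * ∑ n ∈ Finset.range N, (inner ℝ (u (πp n)) e : ℝ))
        atTop atTop := hπp.const_mul_atTop hynorm
    refine h1.congr (fun N => ?_)
    rw [Finset.mul_sum]
    refine Finset.sum_congr rfl (fun n _ => ?_)
    rw [hinner, ← mul_assoc, mul_inv_cancel₀ (ne_of_gt hynorm), one_mul]
  exact pech_exists_pos_block (pech_pos_not_summable πp htend) N C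

set_option maxHeartbeats 1000000 in
private lemma pech_dense {u : ℕ → H} [CompleteSpace H]
    (hsum : Summable fun n => ‖u n‖ ^ 2)
    (hdir : ∀ y : H, y ≠ 0 → ∀ N : ℕ, ∀ C : ℝ,
      ∃ G : Finset ℕ, (∀ n ∈ G, N ≤ n ∧ 0 < (inner ℝ (u n) y : ℝ))
        ∧ C < ∑ n ∈ G, (inner ℝ (u n) y : ℝ))
    (v : H) (N : ℕ) {ε : ℝ} (hε : 0 < ε) :
    ∃ F : Finset ℕ, (∀ n ∈ F, N ≤ n) ∧ ‖(∑ n ∈ F, u n) - v‖ < ε := by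
  classical
  have htail : Tendsto (fun i => ∑' k, ‖u (k + i)‖ ^ 2) atTop (nhds 0) :=
    tendsto_sum_nat_add (fun n => ‖u n‖ ^ 2)
  obtain ⟨N', hN'small, hN'ge⟩ :=
    ((htail.eventually (gt_mem_nhds (show (0:ℝ) < (ε/2)^2 by positivity))).and
      (eventually_ge_atTop N)).exists
  have hsum' : Summable (fun k => ‖u (k + N')‖ ^ 2) := (summable_nat_add_iff N').2 hsum
  -- finite sums over sets beyond N' are small
  have key : ∀ F : Finset ℕ, (∀ n ∈ F, N' ≤ n) →
      ∑ n ∈ F, ‖u n‖ ^ 2 ≤ ∑' k, ‖u (k + N')‖ ^ 2 := by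
    intro F hF
    have h1 : ∑ n ∈ F, ‖u n‖ ^ 2 = ∑ m ∈ F.image (· - N'), ‖u (m + N')‖ ^ 2 := by
      rw [Finset.sum_image (fun a ha b hb hab => by
        have := hF a ha; have := hF b hb; omega)]
      refine Finset.sum_congr rfl (fun n hn => ?_)
      have hnn := hF n hn
      have harg : n - N' + N' = n := by omega
      rw [harg]
    rw [h1]
    exact Summable.sum_le_tsum _ (fun k _ => by positivity) hsum'
  -- the convex set of fractional sums
  set P : Set H := {w | ∃ p : ℕ → ℝ, (∀ n, 0 ≤ p n ∧ p n ≤ 1) ∧ (∀ n, p n ≠ 0 → N' ≤ n) ∧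
    ∃ Fp : Finset ℕ, (∀ n, p n ≠ 0 → n ∈ Fp) ∧ w = ∑ n ∈ Fp, p n • u n} with hP_def
  have hzero : (0:H) ∈ P := ⟨0, fun n => by norm_num, fun n hn => absurd rfl hn,
    ∅, fun n hn => absurd rfl hn, by simp⟩
  have hsum_ext : ∀ (p : ℕ → ℝ) (F1 F2 : Finset ℕ), (∀ n, p n ≠ 0 → n ∈ F1) → F1 ⊆ F2 →
      ∑ n ∈ F2, p n • u n = ∑ n ∈ F1, p n • u n := by
    intro p F1 F2 hp hsub
    refine (Finset.sum_subset hsub (fun x _ hx1 => ?_)).symm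
    have : p x = 0 := by
      by_contra hne
      exact hx1 (hp x hne)
    simp [this]
  have hPconv : Convex ℝ P := by
    intro w1 h1 w2 h2 θ μ hθ hμ hθμ
    obtain ⟨p1, hp1, hs1, F1, hF1, rfl⟩ := h1
    obtain ⟨p2, hp2, hs2, F2, hF2, rfl⟩ := h2
    refine ⟨fun n => θ * p1 n + μ * p2 n, ?_, ?_, F1 ∪ F2, ?_, ?_⟩
    · intro n
      refine ⟨?_, ?_⟩
      · have := (hp1 n).1; have := (hp2 n).1
        show 0 ≤ θ * p1 n + μ * p2 n
        positivity
      · have h1' := (hp1 n).2; have h2' := (hp2 n).2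
        have h1'' := (hp1 n).1; have h2'' := (hp2 n).1
        show θ * p1 n + μ * p2 n ≤ 1
        nlinarith
    · intro n hn
      by_cases hz1 : p1 n = 0
      · by_cases hz2 : p2 n = 0
        · exfalso; apply hn; show θ * p1 n + μ * p2 n = 0; rw [hz1, hz2]; ring
        · exact hs2 n hz2
      · exact hs1 n hz1
    · intro n hn
      by_cases hz1 : p1 n = 0
      · by_cases hz2 : p2 n = 0
        · exfalso; apply hn; show θ * p1 n + μ * p2 n = 0; rw [hz1, hz2]; ring
        · exact Finset.mem_union_right _ (hF2 n hz2)
      · exact Finset.mem_union_left _ (hF1 n hz1)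
    · have e1 : ∑ n ∈ F1 ∪ F2, p1 n • u n = ∑ n ∈ F1, p1 n • u n :=
        hsum_ext p1 F1 (F1 ∪ F2) hF1 Finset.subset_union_left
      have e2 : ∑ n ∈ F1 ∪ F2, p2 n • u n = ∑ n ∈ F2, p2 n • u n :=
        hsum_ext p2 F2 (F1 ∪ F2) hF2 Finset.subset_union_right
      rw [← e1, ← e2, Finset.smul_sum, Finset.smul_sum, ← Finset.sum_add_distrib]
      refine Finset.sum_congr rfl (fun n _ => ?_)
      rw [add_smul, smul_smul, smul_smul]
  -- v is in the closure of P
  have hvP : v ∈ closure P := by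
    by_contra hv
    obtain ⟨f, c, hfa, hfv⟩ :=
      geometric_hahn_banach_closed_point (hPconv.closure) isClosed_closure hv
    have hc0 : (0:ℝ) < c := by
      have := hfa 0 (subset_closure hzero)
      simpa using this
    set y : H := (InnerProductSpace.toDual ℝ H).symm f with hy_def
    have hyx : ∀ x : H, (inner ℝ y x : ℝ) = f x := fun x =>
      InnerProductSpace.toDual_symm_apply
    have hy : y ≠ 0 := by
      intro h0
      have : f v = 0 := by rw [← hyx, h0, inner_zero_left]
      linarith
    obtain ⟨G, hG1, hG2⟩ := hdir y hy N' c
    have hwP : (∑ n ∈ G, u n) ∈ P := by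
      refine ⟨fun n => if n ∈ G then 1 else 0, fun n => ?_, fun n hn => ?_, G,
        fun n hn => ?_, ?_⟩
      · show (0:ℝ) ≤ (if n ∈ G then 1 else 0) ∧ (if n ∈ G then (1:ℝ) else 0) ≤ 1
        by_cases hG : n ∈ G <;> simp [hG]
      · by_cases hG : n ∈ G
        · exact (hG1 n hG).1
        · exfalso; apply hn; show (if n ∈ G then (1:ℝ) else 0) = 0; simp [hG]
      · by_cases hG : n ∈ G
        · exact hG
        · exfalso; apply hn; show (if n ∈ G then (1:ℝ) else 0) = 0; simp [hG]
      · refine (Finset.sum_congr rfl (fun n hn => ?_)).symm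
        show (if n ∈ G then (1:ℝ) else 0) • u n = u n
        simp [hn]
    have hlt := hfa _ (subset_closure hwP)
    have : c < f (∑ n ∈ G, u n) := by
      rw [map_sum]
      refine lt_of_lt_of_le hG2 (le_of_eq ?_)
      refine Finset.sum_congr rfl (fun n _ => ?_)
      rw [← hyx, real_inner_comm]
    linarith
  -- pick a fractional point close to v
  obtain ⟨w, hwP, hwv⟩ : ∃ w ∈ P, ‖w - v‖ < ε / 2 := by
    have := Metric.mem_closure_iff.1 hvP (ε/2) (by positivity)
    obtain ⟨w, hw, hd⟩ := this
    exact ⟨w, hw, by rwa [dist_comm, dist_eq_norm] at hd⟩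
  obtain ⟨p, hp, hsupp, Fp, hFp, rfl⟩ := hwP
  set F' : Finset ℕ := Fp.filter (fun n => p n ≠ 0) with hF'_def
  have hF'mem : ∀ n ∈ F', N' ≤ n := fun n hn =>
    hsupp n (Finset.mem_filter.1 hn).2
  have hF'sum : ∑ n ∈ F', p n • u n = ∑ n ∈ Fp, p n • u n :=
    Finset.sum_filter_of_ne (fun x _ hx => by
      intro h0
      exact hx (by rw [h0, zero_smul]))
  obtain ⟨G, hGF', hGb⟩ := pech_round u F' p (fun n => (hp n).1) (fun n => (hp n).2)
  have hGsmall : ‖(∑ n ∈ G, u n) - ∑ n ∈ Fp, p n • u n‖ < ε / 2 := by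
    rw [← hF'sum]
    have h2 : ∑ n ∈ F', ‖u n‖ ^ 2 < (ε/2)^2 := lt_of_le_of_lt (key F' hF'mem) hN'small
    nlinarith [norm_nonneg ((∑ n ∈ G, u n) - ∑ n ∈ F', p n • u n), hGb]
  refine ⟨G, fun n hn => le_trans hN'ge (hF'mem n (hGF' hn)), ?_⟩
  calc ‖(∑ n ∈ G, u n) - v‖
      ≤ ‖(∑ n ∈ G, u n) - ∑ n ∈ Fp, p n • u n‖ + ‖(∑ n ∈ Fp, p n • u n) - v‖ := by
        have : (∑ n ∈ G, u n) - v
            = ((∑ n ∈ G, u n) - ∑ n ∈ Fp, p n • u n) + ((∑ n ∈ Fp, p n • u n) - v) := by abel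
        rw [this]
        exact norm_add_le _ _
    _ < ε / 2 + ε / 2 := add_lt_add hGsmall hwv
    _ = ε := by ring

private lemma pech_T_anti {u : ℕ → H} (hsum : Summable fun n => ‖u n‖ ^ 2)
    {M N : ℕ} (h : M ≤ N) :
    (∑' k, ‖u (k + N)‖ ^ 2) ≤ ∑' k, ‖u (k + M)‖ ^ 2 := by
  have hg : Summable (fun j => ‖u (j + M)‖ ^ 2) := (summable_nat_add_iff M).2 hsum
  have key := Summable.sum_add_tsum_nat_add (f := fun j => ‖u (j + M)‖ ^ 2) (N - M) hg
  have he : ∀ j : ℕ, j + (N - M) + M = j + N := fun j => by omega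
  have h1 : ∑' k, ‖u (k + N)‖ ^ 2 = ∑' j, ‖u (j + (N - M) + M)‖ ^ 2 :=
    tsum_congr fun j => by rw [he j]
  have h2 : 0 ≤ ∑ i ∈ Finset.range (N - M), ‖u (i + M)‖ ^ 2 :=
    Finset.sum_nonneg fun i _ => by positivity
  rw [h1]
  linarith [key]

private lemma pech_step {u : ℕ → H} (v : H) (T : ℕ → ℝ) (ε : ℕ → ℝ)
    (hdense : ∀ (w : H) (N : ℕ), ∀ δ : ℝ, 0 < δ →
      ∃ F : Finset ℕ, (∀ n ∈ F, N ≤ n) ∧ ‖(∑ n ∈ F, u n) - w‖ < δ)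
    (hsq : ∀ (N : ℕ) (F : Finset ℕ), (∀ n ∈ F, N ≤ n) → ∑ n ∈ F, ‖u n‖ ^ 2 ≤ T N)
    (hTanti : ∀ {M N : ℕ}, M ≤ N → T N ≤ T M) (hT0 : ∀ N, 0 ≤ T N)
    (hεpos : ∀ k, 0 < ε k)
    (k : ℕ) (l : List ℕ) (hnd : l.Nodup) (hcov : ∀ i, i < k → i ∈ l)
    (hclose : ‖(l.map u).sum - v‖ ≤ ε k) :
    ∃ b : List ℕ, ((l ++ b).Nodup ∧ (∀ i, i < k + 1 → i ∈ l ++ b) ∧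
        ‖((l ++ b).map u).sum - v‖ ≤ ε (k + 1)) ∧
      ∀ t, ‖((l ++ b.take t).map u).sum - v‖
        ≤ 2 * ε k + ε (k + 1) + 3 * Real.sqrt (T k) := by
  classical
  set N₀ : ℕ := max (k + 1) (l.toFinset.sup id + 1) with hN₀
  have hN₀l : ∀ n, N₀ ≤ n → n ∉ l := by
    intro n hn hmem
    have h1 : n ≤ l.toFinset.sup id := Finset.le_sup (f := id) (List.mem_toFinset.2 hmem)
    have h2 : l.toFinset.sup id + 1 ≤ N₀ := le_max_right _ _
    omega
  have hN₀k : k + 1 ≤ N₀ := le_max_left _ _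
  set e : List ℕ := if k ∈ l then [] else [k] with he
  have hle_nd : (l ++ e).Nodup := by
    by_cases hkl : k ∈ l
    · simpa [he, hkl] using hnd
    · rw [he, if_neg hkl, List.nodup_append]
      exact ⟨hnd, List.nodup_singleton k, by
        intro a ha b hb hab
        rw [List.mem_singleton] at hb
        subst hb; subst hab; exact hkl ha⟩
  have hcov' : ∀ i, i < k + 1 → i ∈ l ++ e := by
    intro i hi
    rcases Nat.lt_succ_iff_lt_or_eq.1 hi with h | rfl
    · exact List.mem_append_left _ (hcov i h)
    · by_cases hkl : i ∈ l
      · exact List.mem_append_left _ hkl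
      · refine List.mem_append_right _ ?_
        rw [he, if_neg hkl]
        exact List.mem_singleton.2 rfl
  have hemem : ∀ a, a ∈ e → a = k := by
    intro a ha
    by_cases hkl : k ∈ l
    · rw [he, if_pos hkl] at ha; simp at ha
    · rw [he, if_neg hkl] at ha; exact List.mem_singleton.1 ha
  have huk2 : ‖u k‖ ^ 2 ≤ T k := by
    have := hsq k {k} (by simp)
    simpa using this
  have huk : ‖u k‖ ≤ Real.sqrt (T k) := by
    rw [Real.le_sqrt (norm_nonneg _) (hT0 k)]
    exact huk2
  have he_norm : ∀ t, ‖((e.take t).map u).sum‖ ≤ Real.sqrt (T k) := by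
    intro t
    by_cases hkl : k ∈ l
    · simp [he, hkl, Real.sqrt_nonneg]
    · cases t with
      | zero => simp [Real.sqrt_nonneg]
      | succ t =>
        rw [he, if_neg hkl]
        simpa using huk
  have he_norm' : ‖(e.map u).sum‖ ≤ Real.sqrt (T k) := by
    have := he_norm e.length
    rwa [List.take_length] at this
  have hl'close : ‖((l ++ e).map u).sum - v‖ ≤ ε k + Real.sqrt (T k) := by
    rw [List.map_append, List.sum_append]
    have heq : (l.map u).sum + (e.map u).sum - v = ((l.map u).sum - v) + (e.map u).sum := by
      abel
    rw [heq]
    exact (norm_add_le _ _).trans (add_le_add hclose he_norm')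
  obtain ⟨F, hFge, hFclose⟩ := hdense (v - ((l ++ e).map u).sum) N₀ (ε (k + 1)) (hεpos (k + 1))
  obtain ⟨b'', hb''nd, hb''toF, hb''pref⟩ := pech_ordering u F
  have hkN₀ : k ≤ N₀ := le_trans (Nat.le_succ k) hN₀k
  have hFsq : ∑ n ∈ F, ‖u n‖ ^ 2 ≤ T k :=
    le_trans (hsq N₀ F hFge) (hTanti hkN₀)
  have hFsqrt : Real.sqrt (∑ n ∈ F, ‖u n‖ ^ 2) ≤ Real.sqrt (T k) :=
    Real.sqrt_le_sqrt hFsq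
  have hsF : ‖∑ n ∈ F, u n‖ ≤ ε k + Real.sqrt (T k) + ε (k + 1) := by
    have h1 : (∑ n ∈ F, u n)
        = ((∑ n ∈ F, u n) - (v - ((l ++ e).map u).sum)) + (v - ((l ++ e).map u).sum) := by
      abel
    calc ‖∑ n ∈ F, u n‖
        ≤ ‖(∑ n ∈ F, u n) - (v - ((l ++ e).map u).sum)‖ + ‖v - ((l ++ e).map u).sum‖ := by
          conv_lhs => rw [h1]
          exact norm_add_le _ _
      _ ≤ ε (k + 1) + (ε k + Real.sqrt (T k)) := by
          refine add_le_add hFclose.le ?_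
          rw [show ‖v - ((l ++ e).map u).sum‖ = ‖((l ++ e).map u).sum - v‖ from
            norm_sub_rev _ _]
          exact hl'close
      _ = ε k + Real.sqrt (T k) + ε (k + 1) := by ring
  have hb''bound : ∀ j, ‖((b''.take j).map u).sum‖
      ≤ ε k + 2 * Real.sqrt (T k) + ε (k + 1) := by
    intro j
    have := hb''pref j
    have h2 := hFsqrt
    linarith [hsF]
  have hb''memF : ∀ a, a ∈ b'' → a ∈ F := fun a ha => by
    rw [← hb''toF]; exact List.mem_toFinset.2 ha
  refine ⟨e ++ b'', ⟨?_, ?_, ?_⟩, ?_⟩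
  · rw [← List.append_assoc, List.nodup_append]
    refine ⟨hle_nd, hb''nd, ?_⟩
    intro a ha b hab hbeq
    subst hbeq
    have haF : a ∈ F := hb''memF a hab
    have haN₀ : N₀ ≤ a := hFge a haF
    rcases List.mem_append.1 ha with h | h
    · exact hN₀l a haN₀ h
    · have := hemem a h
      omega
  · intro i hi
    rcases List.mem_append.1 (hcov' i hi) with h | h
    · exact List.mem_append_left _ h
    · exact List.mem_append_right _ (List.mem_append_left _ h)
  · have hsum_eq : ((l ++ (e ++ b'')).map u).sum = ((l ++ e).map u).sum + ∑ n ∈ F, u n := by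
      rw [← List.append_assoc, List.map_append, List.sum_append]
      congr 1
      rw [← hb''toF, List.sum_toFinset u hb''nd]
    rw [hsum_eq]
    have heq : ((l ++ e).map u).sum + (∑ n ∈ F, u n) - v
        = (∑ n ∈ F, u n) - (v - ((l ++ e).map u).sum) := by abel
    rw [heq]
    exact hFclose.le
  · intro t
    have htake : (e ++ b'').take t = e.take t ++ b''.take (t - e.length) :=
      List.take_append
    rw [htake, ← List.append_assoc, List.map_append, List.sum_append,
      List.map_append, List.sum_append]
    have heq : (l.map u).sum + ((e.take t).map u).sum + ((b''.take (t - e.length)).map u).sum - v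
        = ((l.map u).sum - v) + ((e.take t).map u).sum
          + ((b''.take (t - e.length)).map u).sum := by abel
    rw [heq]
    have h1 := he_norm t
    have h2 := hb''bound (t - e.length)
    calc ‖((l.map u).sum - v) + ((e.take t).map u).sum
          + ((b''.take (t - e.length)).map u).sum‖
        ≤ ‖((l.map u).sum - v) + ((e.take t).map u).sum‖
          + ‖((b''.take (t - e.length)).map u).sum‖ := norm_add_le _ _
      _ ≤ (‖(l.map u).sum - v‖ + ‖((e.take t).map u).sum‖)
          + ‖((b''.take (t - e.length)).map u).sum‖ :=
          add_le_add_left (norm_add_le _ _) _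
      _ ≤ (ε k + Real.sqrt (T k)) + (ε k + 2 * Real.sqrt (T k) + ε (k + 1)) := by
          refine add_le_add (add_le_add hclose h1) h2
      _ = 2 * ε k + ε (k + 1) + 3 * Real.sqrt (T k) := by ring


end pecherskyHelpers

set_option maxHeartbeats 1000000 in
theorem pechersky {H : Type*} [NormedAddCommGroup H] [InnerProductSpace ℝ H] [CompleteSpace H]
    (u : ℕ → H) (hsum : Summable fun n => ‖u n‖ ^ 2)
    (hcond : ∀ e : H, ‖e‖ = 1 →
      (∃ πp : Equiv.Perm ℕ, Filter.Tendsto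
        (fun N => ∑ n ∈ Finset.range N, (inner ℝ (u (πp n)) e : ℝ)) Filter.atTop Filter.atTop) ∧
      (∃ πm : Equiv.Perm ℕ, Filter.Tendsto
        (fun N => ∑ n ∈ Finset.range N, (inner ℝ (u (πm n)) e : ℝ)) Filter.atTop Filter.atBot)) :
    ∀ v : H, ∃ π : Equiv.Perm ℕ,
      Filter.Tendsto (fun N => ∑ n ∈ Finset.range N, u (π n)) Filter.atTop (nhds v) := by
  intro v
  classical
  have hdir : ∀ y : H, y ≠ 0 → ∀ N : ℕ, ∀ C : ℝ,
      ∃ G : Finset ℕ, (∀ n ∈ G, N ≤ n ∧ 0 < (inner ℝ (u n) y : ℝ))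
        ∧ C < ∑ n ∈ G, (inner ℝ (u n) y : ℝ) := fun y hy N C => pech_dir hcond hy N C
  have hdense : ∀ (w : H) (N : ℕ), ∀ δ : ℝ, 0 < δ →
      ∃ F : Finset ℕ, (∀ n ∈ F, N ≤ n) ∧ ‖(∑ n ∈ F, u n) - w‖ < δ :=
    fun w N δ hδ => pech_dense hsum hdir w N hδ
  set T : ℕ → ℝ := fun N => ∑' k, ‖u (k + N)‖ ^ 2 with hT_def
  have hT0 : ∀ N, 0 ≤ T N := fun N => tsum_nonneg fun k => by positivity
  have hTanti : ∀ {M N : ℕ}, M ≤ N → T N ≤ T M := fun h => pech_T_anti hsum h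
  have hTtend : Tendsto T atTop (nhds 0) := tendsto_sum_nat_add (fun n => ‖u n‖ ^ 2)
  have hsq : ∀ (N : ℕ) (F : Finset ℕ), (∀ n ∈ F, N ≤ n) →
      ∑ n ∈ F, ‖u n‖ ^ 2 ≤ T N := by
    intro N F hF
    have hsum' : Summable (fun k => ‖u (k + N)‖ ^ 2) := (summable_nat_add_iff N).2 hsum
    have h1 : ∑ n ∈ F, ‖u n‖ ^ 2 = ∑ m ∈ F.image (· - N), ‖u (m + N)‖ ^ 2 := by
      rw [Finset.sum_image (fun a ha b hb hab => by
        have := hF a ha; have := hF b hb; omega)]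
      refine Finset.sum_congr rfl (fun n hn => ?_)
      have hnn := hF n hn
      have harg : n - N + N = n := by omega
      rw [harg]
    rw [h1]
    exact Summable.sum_le_tsum _ (fun k _ => by positivity) hsum'
  set ε : ℕ → ℝ := fun k => (‖v‖ + 1) * (1 / 2) ^ k with hε_def
  have hεpos : ∀ k, 0 < ε k := fun k => by
    have h1 : (0:ℝ) < ‖v‖ + 1 := by positivity
    have h2 : (0:ℝ) < (1 / 2) ^ k := by positivity
    exact mul_pos h1 h2
  set Cb : ℕ → ℝ := fun k => 2 * ε k + ε (k + 1) + 3 * Real.sqrt (T k) with hCb_def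
  have step : ∀ (k : ℕ) (l : List ℕ),
      (l.Nodup ∧ (∀ i, i < k → i ∈ l) ∧ ‖(l.map u).sum - v‖ ≤ ε k) →
      ∃ b : List ℕ, ((l ++ b).Nodup ∧ (∀ i, i < k + 1 → i ∈ l ++ b) ∧
        ‖((l ++ b).map u).sum - v‖ ≤ ε (k + 1)) ∧
      ∀ t, ‖((l ++ b.take t).map u).sum - v‖ ≤ Cb k :=
    fun k l h => pech_step v T ε hdense hsq hTanti hT0 hεpos k l h.1 h.2.1 h.2.2
  set next : ℕ → List ℕ → List ℕ := fun k l =>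
    if h : (l.Nodup ∧ (∀ i, i < k → i ∈ l) ∧ ‖(l.map u).sum - v‖ ≤ ε k)
    then l ++ (step k l h).choose else [] with hnext_def
  set L : ℕ → List ℕ := fun k => Nat.rec [] (fun k ih => next k ih) k with hL_def
  have hL0 : L 0 = [] := rfl
  have hLsucc : ∀ k, L (k + 1) = next k (L k) := fun k => rfl
  have hGood : ∀ k, ((L k).Nodup ∧ (∀ i, i < k → i ∈ L k)
      ∧ ‖((L k).map u).sum - v‖ ≤ ε k) := by
    intro k
    induction k with
    | zero =>
      refine ⟨by rw [hL0]; exact List.nodup_nil, fun i hi => absurd hi (Nat.not_lt_zero i), ?_⟩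
      rw [hL0]
      simp only [List.map_nil, List.sum_nil, zero_sub, norm_neg]
      show ‖v‖ ≤ (‖v‖ + 1) * (1 / 2) ^ 0
      norm_num
    | succ k ih =>
      have hstep2 : L (k + 1) = L k ++ (step k (L k) ih).choose := by
        rw [hLsucc k, hnext_def]
        exact dif_pos ih
      rw [hstep2]
      exact ((step k (L k) ih).choose_spec).1
  have hLstep : ∀ k, L (k + 1) = L k ++ (step k (L k) (hGood k)).choose := by
    intro k
    rw [hLsucc k, hnext_def]
    exact dif_pos (hGood k)
  have hbridge : ∀ k j, (L k).length ≤ j →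
      ‖(((L (k + 1)).take j).map u).sum - v‖ ≤ Cb k := by
    intro k j hj
    have h2 := ((step k (L k) (hGood k)).choose_spec).2 (j - (L k).length)
    rw [hLstep k, List.take_append, List.take_of_length_le hj]
    exact h2
  have hlen_ge : ∀ k, k ≤ (L k).length := by
    intro k
    have hsub : Finset.range k ⊆ (L k).toFinset := fun i hi =>
      List.mem_toFinset.2 ((hGood k).2.1 i (Finset.mem_range.1 hi))
    have hc := Finset.card_le_card hsub
    rwa [Finset.card_range, List.toFinset_card_of_nodup (hGood k).1] at hc
  have hprefix : ∀ k m, k ≤ m → L k <+: L m := by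
    intro k m hkm
    induction m with
    | zero =>
      have hk0 : k = 0 := by omega
      subst hk0; exact List.prefix_refl _
    | succ m ih =>
      by_cases h : k ≤ m
      · refine (ih h).trans ?_
        rw [hLstep m]
        exact List.prefix_append _ _
      · have hk : k = m + 1 := by omega
        subst hk; exact List.prefix_refl _
  have hlen_succ : ∀ n, n < (L (n + 1)).length := fun n =>
    lt_of_lt_of_le (Nat.lt_succ_self n) (hlen_ge (n + 1))
  set f : ℕ → ℕ := fun n => (L (n + 1)).getD n 0 with hf_def
  have hf_stable : ∀ n m, n < (L m).length → (L m).getD n 0 = f n := by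
    intro n m hnm
    rcases le_total m (n + 1) with h | h
    · have hpre := hprefix m (n + 1) h
      show (L m).getD n 0 = (L (n + 1)).getD n 0
      rw [List.getD_eq_getElem _ _ hnm,
        List.getD_eq_getElem _ _ (lt_of_lt_of_le hnm hpre.length_le)]
      exact hpre.getElem hnm
    · have hpre := hprefix (n + 1) m h
      show (L m).getD n 0 = (L (n + 1)).getD n 0
      rw [List.getD_eq_getElem _ _ hnm, List.getD_eq_getElem _ _ (hlen_succ n)]
      exact (hpre.getElem (hlen_succ n)).symm
  have hf_inj : Function.Injective f := by
    intro a b hab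
    set M := max (a + 1) (b + 1) with hM
    have ha : a < (L M).length :=
      lt_of_lt_of_le (hlen_succ a)
        (hprefix (a + 1) M (le_max_left (a + 1) (b + 1))).length_le
    have hb : b < (L M).length :=
      lt_of_lt_of_le (hlen_succ b)
        (hprefix (b + 1) M (le_max_right (a + 1) (b + 1))).length_le
    have h1 := hf_stable a M ha
    have h2 := hf_stable b M hb
    rw [List.getD_eq_getElem _ _ ha] at h1
    rw [List.getD_eq_getElem _ _ hb] at h2
    have heq : (L M)[a] = (L M)[b] := by rw [h1, h2, hab]
    exact ((hGood M).1.getElem_inj_iff).1 heq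
  have hf_surj : Function.Surjective f := by
    intro j
    have hjmem : j ∈ L (j + 1) := (hGood (j + 1)).2.1 j (Nat.lt_succ_self j)
    obtain ⟨n, hn, hget⟩ := List.getElem_of_mem hjmem
    refine ⟨n, ?_⟩
    have hst := hf_stable n (j + 1) hn
    rw [List.getD_eq_getElem _ _ hn] at hst
    rw [← hst, hget]
  set π : Equiv.Perm ℕ := Equiv.ofBijective f ⟨hf_inj, hf_surj⟩ with hπ_def
  have hπapp : ∀ n, π n = f n := fun n => rfl
  have hpartial : ∀ M K, M ≤ (L K).length →
      ∑ n ∈ Finset.range M, u (f n) = (((L K).take M).map u).sum := by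
    intro M
    induction M with
    | zero => intro K _; simp
    | succ M ih =>
      intro K hK
      have hM : M < (L K).length := hK
      rw [Finset.sum_range_succ, ih K (Nat.le_of_succ_le hK)]
      rw [List.take_succ, List.getElem?_eq_getElem hM]
      rw [List.map_append, List.sum_append]
      simp only [Option.toList_some, List.map_cons, List.map_nil, List.sum_cons,
        List.sum_nil, add_zero]
      congr 1
      have hst := hf_stable M K hM
      rw [List.getD_eq_getElem _ _ hM] at hst
      rw [hst]
  have hεtend : Tendsto ε atTop (nhds 0) := by
    have h2 : Tendsto (fun k : ℕ => ((1:ℝ) / 2) ^ k) atTop (nhds 0) :=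
      tendsto_pow_atTop_nhds_zero_of_lt_one (by norm_num) (by norm_num)
    have h3 := h2.const_mul (‖v‖ + 1)
    rw [mul_zero] at h3
    exact h3
  have hCbtend : Tendsto Cb atTop (nhds 0) := by
    have h1 : Tendsto (fun k => ε (k + 1)) atTop (nhds 0) :=
      hεtend.comp (tendsto_add_atTop_nat 1)
    have h2 : Tendsto (fun k => Real.sqrt (T k)) atTop (nhds 0) := by
      have hc := Real.continuous_sqrt.tendsto 0
      rw [Real.sqrt_zero] at hc
      exact hc.comp hTtend
    have h4 := ((hεtend.const_mul 2).add h1).add (h2.const_mul 3)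
    norm_num at h4
    exact h4
  refine ⟨π, Metric.tendsto_atTop.2 ?_⟩
  intro δ hδ
  obtain ⟨K, hK⟩ := eventually_atTop.1 (hCbtend.eventually (gt_mem_nhds hδ))
  refine ⟨(L K).length, fun M hM => ?_⟩
  have hKM : K ≤ M := le_trans (hlen_ge K) hM
  set i := Nat.findGreatest (fun i => (L i).length ≤ M) M with hi_def
  have hMK : (L K).length ≤ M := hM
  have hiK : K ≤ i := Nat.le_findGreatest (P := fun i => (L i).length ≤ M) hKM hMK
  have hile : (L i).length ≤ M :=
    Nat.findGreatest_spec (P := fun i => (L i).length ≤ M) hKM hMK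
  have hnext2 : M < (L (i + 1)).length := by
    by_cases h : i + 1 ≤ M
    · by_contra hcon
      push_neg at hcon
      exact (Nat.findGreatest_is_greatest (Nat.lt_succ_self i) h) hcon
    · push_neg at h
      have h2 := hlen_ge (i + 1)
      omega
  rw [dist_eq_norm]
  have hsum_eq : ∑ n ∈ Finset.range M, u (π n) = ∑ n ∈ Finset.range M, u (f n) :=
    Finset.sum_congr rfl fun n _ => by rw [hπapp]
  rw [hsum_eq, hpartial M (i + 1) hnext2.le]
  exact lt_of_le_of_lt (hbridge i M hile) (hK i hiK)
end
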